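/- Call a real symmetric n×n matrix A friendly if A has n distinct eigenvalues and every eigenvector u of A satisfies 𝟙ᵀu ≠ 0. If A is friendly, then the only doubly stochastic matrix P satisfying P A = A P is the identity matrix; i.e., the set { P doubly stochastic : P A = A P } is the singleton {I}. -/

import Mathlib

open Matrix BigOperators

def IsPermMatrix {n : ℕ} (P : Matrix (Fin n) (Fin n) ℝ) : Prop :=
  (∀ i j, P i j = 0 ∨ P i j = 1) ∧ (∀ i, ∑ j, P i j = 1) ∧ (∀ j, ∑ i, P i j = 1)

def IsDoublyStochastic {n : ℕ} (P : Matrix (Fin n) (Fin n) ℝ) : Prop :=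
  (∀ i j, 0 ≤ P i j) ∧ (∀ i, ∑ j, P i j = 1) ∧ (∀ j, ∑ i, P i j = 1)

theorem stmt_15 {n : ℕ} (A : Matrix (Fin n) (Fin n) ℝ)
    (hA : A.IsSymm)
    (hdist : ∃ (lam : Fin n → ℝ) (v : Fin n → Fin n → ℝ),
      Function.Injective lam ∧ ∀ i, v i ≠ 0 ∧ A *ᵥ v i = lam i • v i)
    (hone : ∀ (u : Fin n → ℝ) (μ : ℝ) , u ≠ 0 → A *ᵥ u = μ • u → ∑ i, u i ≠ 0) :
    {P : Matrix (Fin n) (Fin n) ℝ | IsDoublyStochastic P ∧ P * A = A * P} = {1} := by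
  rcases Nat.eq_zero_or_pos n with hn | hn
  · subst hn
    ext P
    simp only [Set.mem_setOf_eq, Set.mem_singleton_iff]
    constructor
    · intro _
      ext i j
      exact i.elim0
    · rintro rfl
      exact ⟨⟨fun i => i.elim0, fun i => i.elim0, fun j => j.elim0⟩, by rw [one_mul, mul_one]⟩
  have : Nonempty (Fin n) := ⟨⟨0, hn⟩⟩
  obtain ⟨lam, v, hinj, hv⟩ := hdist
  -- eigenvectors are linearly independent
  have hLI : LinearIndependent ℝ v := by
    apply Module.End.eigenvectors_linearIndependent' (Matrix.mulVecLin A) lam hinj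
    intro i
    refine ⟨?_, (hv i).1⟩
    rw [Module.End.mem_eigenspace_iff]
    simpa using (hv i).2
  have hcard : Fintype.card (Fin n) = Module.finrank ℝ (Fin n → ℝ) := by simp
  let b : Module.Basis (Fin n) ℝ (Fin n → ℝ) := basisOfLinearIndependentOfCardEqFinrank hLI hcard
  have hb : ∀ i, b i = v i := fun i => congrFun (coe_basisOfLinearIndependentOfCardEqFinrank hLI hcard) i
  ext P
  simp only [Set.mem_setOf_eq, Set.mem_singleton_iff]
  constructor
  · rintro ⟨⟨hpos, hrow, hcol⟩, hcomm⟩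
    -- column sums: mulVec preserves the total sum
    have hsum : ∀ u : Fin n → ℝ, ∑ k, (P *ᵥ u) k = ∑ k, u k := by
      intro u
      simp only [Matrix.mulVec, dotProduct]
      rw [Finset.sum_comm]
      have : ∀ j, ∑ k, P k j * u j = u j := by
        intro j
        rw [← Finset.sum_mul, hcol j, one_mul]
      simp [this]
    -- P fixes each eigenvector
    have hfix : ∀ i, P *ᵥ v i = v i := by
      intro i
      set w : Fin n → ℝ := P *ᵥ v i with hw
      have hAw : A *ᵥ w = lam i • w := by
        have h1 : A *ᵥ (P *ᵥ v i) = (A * P) *ᵥ v i := (Matrix.mulVec_mulVec _ _ _)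
        rw [hw, h1, ← hcomm, ← Matrix.mulVec_mulVec, (hv i).2, Matrix.mulVec_smul]
      set c : Fin n → ℝ := fun j => b.repr w j with hc
      have hwsum : w = ∑ j, c j • v j := by
        conv_lhs => rw [← b.sum_repr w]
        exact Finset.sum_congr rfl fun j _ => by rw [hb j]
      -- apply A to both sides
      have hA1 : A *ᵥ w = ∑ j, (lam j * c j) • v j := by
        rw [hwsum, ← Matrix.mulVecLin_apply, map_sum]
        refine Finset.sum_congr rfl fun j _ => ?_
        rw [_root_.map_smul, Matrix.mulVecLin_apply, (hv j).2, smul_smul, mul_comm]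
      have hA2 : A *ᵥ w = ∑ j, (lam i * c j) • v j := by
        rw [hAw, hwsum, Finset.smul_sum]
        refine Finset.sum_congr rfl fun j _ => ?_
        rw [smul_smul]
      have hzero : ∑ j, ((lam j * c j) - (lam i * c j)) • v j = 0 := by
        simp only [sub_smul]
        rw [Finset.sum_sub_distrib, ← hA1, ← hA2, sub_self]
      have hcoef : ∀ j, (lam j * c j) - (lam i * c j) = 0 := by
        intro j
        exact linearIndependent_iff'.mp hLI Finset.univ _ hzero j (Finset.mem_univ j)
      have hcj : ∀ j, j ≠ i → c j = 0 := by
        intro j hji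
        have hne : lam j ≠ lam i := fun h => hji (hinj h)
        have : (lam j - lam i) * c j = 0 := by linear_combination hcoef j
        rcases mul_eq_zero.mp this with h | h
        · exact absurd (sub_eq_zero.mp h) hne
        · exact h
      have hwi : w = c i • v i := by
        rw [hwsum]
        rw [Finset.sum_eq_single i]
        · intro j _ hji; rw [hcj j hji, zero_smul]
        · intro h; exact absurd (Finset.mem_univ i) h
      -- sum condition forces c i = 1
      have hs : ∑ k, v i k ≠ 0 := hone (v i) (lam i) (hv i).1 (hv i).2
      have hseq : c i * ∑ k, v i k = ∑ k, v i k := by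
        have h := hsum (v i)
        rw [← hw, hwi] at h
        simpa [Pi.smul_apply, smul_eq_mul, ← Finset.mul_sum] using h
      have hci : c i = 1 := mul_right_cancel₀ hs (by rw [one_mul]; exact hseq)
      rw [hwi, hci, one_smul]
    -- conclude P = 1
    have hP : ∀ u : Fin n → ℝ, P *ᵥ u = u := by
      intro u
      have : Matrix.mulVecLin P = LinearMap.id := by
        apply b.ext
        intro i
        simp only [Matrix.mulVecLin_apply, LinearMap.id_coe, id_eq, hb i]
        exact hfix i
      calc P *ᵥ u = Matrix.mulVecLin P u := rfl
        _ = u := by rw [this]; rfl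
    ext i j
    have h := congrFun (hP (Pi.single j 1)) i
    simpa [Matrix.mulVec_single, Matrix.one_apply, Pi.single_apply, eq_comm] using h
  · rintro rfl
    refine ⟨⟨?_, ?_, ?_⟩, by rw [one_mul, mul_one]⟩
    · intro i j
      rw [Matrix.one_apply]
      split <;> norm_num
    · intro i; simp [Matrix.one_apply]
    · intro j; simp [Matrix.one_apply]
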